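/- Let M be the Fibonacci factorable matrix on ℓ² with entries m_{ij} = f_{j+1}²/(f_{i+1} f_{i+2}) for j ≤ i and 0 otherwise, where (f_n) is the Fibonacci sequence. With P = diag{(f_{n+2}² f_{n+3} − f_{n+1}³)/(f_{n+1} f_{n+2} f_{n+3})} and Q = diag{(f_{n+1}² f_{n+2} − f_n³)/f_{n+1}³}, one has M* P M = M Q M*, and moreover I ≤ Q ≤ 2I and (1/2)I ≤ P ≤ 4I; hence M is both posinormal and coposinormal. -/

import Mathlib

open Finset Filter Topology

namespace FibPosAux

noncomputable section

/-- `a n = fib (n+1)` as a real number. -/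
def a (n : ℕ) : ℝ := Nat.fib (n + 1)

lemma a_pos (n : ℕ) : 0 < a n := by
  have : 0 < Nat.fib (n + 1) := Nat.fib_pos.mpr (Nat.succ_pos n)
  unfold a; exact_mod_cast this

lemma a_ne (n : ℕ) : a n ≠ 0 := (a_pos n).ne'

lemma one_le_a (n : ℕ) : 1 ≤ a n := by
  have : 1 ≤ Nat.fib (n + 1) := Nat.fib_pos.mpr (Nat.succ_pos n)
  unfold a; exact_mod_cast this

lemma a_mono {m n : ℕ} (h : m ≤ n) : a m ≤ a n := by
  have := Nat.fib_mono (Nat.succ_le_succ h)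
  unfold a; exact_mod_cast this

lemma fib_le_a (n : ℕ) : (Nat.fib n : ℝ) ≤ a n := by
  have := @Nat.fib_le_fib_succ n
  unfold a; exact_mod_cast this

lemma fib_nonneg (n : ℕ) : (0:ℝ) ≤ (Nat.fib n : ℝ) := by positivity

lemma a_rec (n : ℕ) : a (n + 1) = (Nat.fib n : ℝ) + a n := by
  unfold a
  have : Nat.fib (n + 2) = Nat.fib n + Nat.fib (n + 1) := Nat.fib_add_two
  exact_mod_cast this

lemma a_rec' (n : ℕ) : a (n + 2) = a n + a (n + 1) := by
  unfold a
  have : Nat.fib (n + 3) = Nat.fib (n + 1) + Nat.fib (n + 2) := Nat.fib_add_two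
  exact_mod_cast this

lemma a_le_two (n : ℕ) : a (n + 1) ≤ 2 * a n := by
  have h := a_rec n
  have := fib_le_a n
  have := fib_le_a (n+1)
  have : (Nat.fib n : ℝ) ≤ a n := fib_le_a n
  linarith

lemma le_a_succ (n : ℕ) : (n : ℝ) + 1 ≤ a (n + 1) := by
  have : n + 1 ≤ Nat.fib (n + 2) := by
    induction n with
    | zero => simp
    | succ k ih =>
      have h1 : 1 ≤ Nat.fib (k + 1) := Nat.fib_pos.mpr (Nat.succ_pos k)
      have h2 : Nat.fib (k + 3) = Nat.fib (k + 1) + Nat.fib (k + 2) := Nat.fib_add_two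
      show k + 1 + 1 ≤ Nat.fib (k + 3)
      omega
  unfold a
  exact_mod_cast this

/-- matrix entries. -/
def m (k i : ℕ) : ℝ := if i ≤ k then a i ^ 2 / (a k * a (k + 1)) else 0

def p (n : ℕ) : ℝ := (a (n + 1) ^ 2 * a (n + 2) - a n ^ 3) / (a n * a (n + 1) * a (n + 2))

def q (n : ℕ) : ℝ := (a n ^ 2 * a (n + 1) - (Nat.fib n : ℝ) ^ 3) / a n ^ 3

def g (k : ℕ) : ℝ := 1 / (a k ^ 3 * a (k + 1))

lemma q_lb (n : ℕ) : 1 ≤ q n := by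
  have hy := a_pos n
  have hxy := fib_le_a n
  have hx := fib_nonneg n
  have hr := a_rec n
  unfold q
  rw [le_div_iff₀ (by positivity)]
  nlinarith [mul_nonneg hx (mul_nonneg (sub_nonneg.mpr hxy) (by linarith : (0:ℝ) ≤ (Nat.fib n : ℝ) + a n))]

lemma q_ub (n : ℕ) : q n ≤ 2 := by
  have hy := a_pos n
  have hxy := fib_le_a n
  have hx := fib_nonneg n
  have hr := a_rec n
  unfold q
  rw [div_le_iff₀ (by positivity)]
  nlinarith [pow_nonneg hx 3, mul_le_mul_of_nonneg_left hxy (by positivity : (0:ℝ) ≤ a n ^ 2)]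

lemma p_lb (n : ℕ) : 1 / 2 ≤ p n := by
  have hy := a_pos n
  have hz := a_pos (n + 1)
  have hyz : a n ≤ a (n + 1) := a_mono (Nat.le_succ n)
  have hw := a_rec' n
  have hw' : 0 < a (n + 2) := a_pos (n + 2)
  unfold p
  rw [div_le_div_iff₀ (by norm_num) (by positivity), hw]
  nlinarith [mul_nonneg (sub_nonneg.mpr hyz) (by positivity : (0:ℝ) ≤ 2 * a (n+1) ^ 2 + 3 * a n * a (n+1) + 2 * a n ^ 2)]

lemma p_ub (n : ℕ) : p n ≤ 4 := by
  have hy := a_pos n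
  have hz := a_pos (n + 1)
  have hw := a_pos (n + 2)
  have h2 := a_le_two n
  unfold p
  rw [div_le_iff₀ (by positivity)]
  nlinarith [pow_pos hy 3, mul_le_mul_of_nonneg_right (mul_le_mul_of_nonneg_right h2 (le_of_lt hz)) (le_of_lt hw)]

lemma g_nonneg (k : ℕ) : 0 ≤ g k := by
  have := a_pos k; have := a_pos (k + 1); unfold g; positivity

lemma g_anti (k : ℕ) : g (k + 1) ≤ g k := by
  have hk := a_pos k
  have hk1 := a_pos (k + 1)
  have hk2 := a_pos (k + 2)
  unfold g
  apply one_div_le_one_div_of_le (by positivity)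
  have h1 : a k ^ 3 ≤ a (k + 1) ^ 3 :=
    pow_le_pow_left₀ (le_of_lt hk) (a_mono (Nat.le_succ k)) 3
  have h2 : a (k + 1) ≤ a (k + 1 + 1) := a_mono (Nat.le_succ (k + 1))
  exact mul_le_mul h1 h2 (le_of_lt hk1) (by positivity)

lemma g_tendsto : Tendsto g atTop (𝓝 0) := by
  refine squeeze_zero g_nonneg (fun k => ?_) tendsto_one_div_add_atTop_nhds_zero_nat
  have h3 : 1 ≤ a k ^ 3 := by nlinarith [one_le_a k, sq_nonneg (a k), a_pos k]
  have h4 := mul_le_mul_of_nonneg_right h3 (le_of_lt (a_pos (k + 1)))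
  have hb : (k : ℝ) + 1 ≤ a k ^ 3 * a (k + 1) := by
    have := le_a_succ k
    rw [one_mul] at h4
    linarith
  unfold g
  exact one_div_le_one_div_of_le (by positivity) hb

/-- telescoping identity for the entries. -/
lemma key_tele (i j k : ℕ) :
    m k i * (p k * m k j) =
      if max i j ≤ k then a i ^ 2 * a j ^ 2 * (g k - g (k + 1)) else 0 := by
  unfold m p g
  rcases le_or_gt (max i j) k with h | h
  · rw [if_pos h, if_pos (le_trans (le_max_left i j) h), if_pos (le_trans (le_max_right i j) h)]
    have h0 := a_ne k; have h1 := a_ne (k + 1); have h2 := a_ne (k + 2)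
    field_simp
  · rw [if_neg (not_le.mpr h)]
    rcases lt_max_iff.mp h with hi | hj
    · rw [if_neg (not_le.mpr hi)]; ring
    · rw [if_neg (not_le.mpr hj)]; ring

lemma partial_tele (c : ℝ) (M N : ℕ) :
    ∑ k ∈ range N, (if M ≤ k then c * (g k - g (k + 1)) else 0)
      = c * (g M - g (max M N)) := by
  induction N with
  | zero => simp
  | succ N ih =>
    rw [Finset.sum_range_succ, ih]
    rcases le_or_gt M N with h | h
    · rw [if_pos h, max_eq_right h, max_eq_right (le_trans h (Nat.le_succ N))]
      ring
    · rw [if_neg (not_le.mpr h), max_eq_left (le_of_lt h), max_eq_left h]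
      ring

lemma hasSum_tele (i j : ℕ) :
    HasSum (fun k => m k i * (p k * m k j)) (a i ^ 2 * a j ^ 2 * g (max i j)) := by
  have hnn : ∀ k, 0 ≤ (if max i j ≤ k then a i ^ 2 * a j ^ 2 * (g k - g (k + 1)) else 0) := by
    intro k
    split
    · have := g_anti k
      have := a_pos i; have := a_pos j
      have : 0 ≤ g k - g (k + 1) := by linarith [g_anti k]
      positivity
    · exact le_refl _
  have heq : (fun k => m k i * (p k * m k j))
      = fun k => (if max i j ≤ k then a i ^ 2 * a j ^ 2 * (g k - g (k + 1)) else 0) :=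
    funext (key_tele i j)
  rw [heq, hasSum_iff_tendsto_nat_of_nonneg hnn]
  simp only [partial_tele]
  have hmax : Tendsto (fun N : ℕ => g (max (max i j) N)) atTop (𝓝 0) :=
    g_tendsto.comp (tendsto_atTop_mono (fun N => le_max_right _ _) tendsto_id)
  have h2 : Tendsto (fun N : ℕ => a i ^ 2 * a j ^ 2 * (g (max i j) - g (max (max i j) N)))
      atTop (𝓝 (a i ^ 2 * a j ^ 2 * (g (max i j) - 0))) :=
    (tendsto_const_nhds.sub hmax).const_mul _
  simpa using h2

lemma tele_val (i j : ℕ) :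
    a i ^ 2 * a j ^ 2 * g (max i j) = m (max i j) (min i j) := by
  rcases le_total i j with h | h
  · rw [max_eq_right h, min_eq_left h]
    unfold g m
    rw [if_pos h]
    have := a_ne j; have := a_ne (j + 1)
    field_simp
  · rw [max_eq_left h, min_eq_right h]
    unfold g m
    rw [if_pos h]
    have := a_ne i; have := a_ne (i + 1)
    field_simp

/-- `h3 k = fib k ^ 3 * fib (k+1)`. -/
def h3 (k : ℕ) : ℝ := (Nat.fib k : ℝ) ^ 3 * (Nat.fib (k + 1) : ℝ)

lemma summand_q (k : ℕ) : a k ^ 4 * q k = h3 (k + 1) - h3 k := by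
  have hk : ((Nat.fib (k + 1) : ℝ)) ≠ 0 := a_ne k
  unfold q h3 a
  field_simp

lemma sum_q (n : ℕ) : ∑ k ∈ range (n + 1), a k ^ 4 * q k = a n ^ 3 * a (n + 1) := by
  rw [Finset.sum_congr rfl (fun k _ => summand_q k), Finset.sum_range_sub h3]
  unfold h3 a
  simp

lemma rhs_sum (i j : ℕ) :
    ∑ k ∈ range (i + 1), a k ^ 2 * (q k * m j k)
      = a (min i j) ^ 3 * a (min i j + 1) / (a j * a (j + 1)) := by
  have hstep : ∀ k, a k ^ 2 * (q k * m j k)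
      = if k ≤ j then a k ^ 4 * q k / (a j * a (j + 1)) else 0 := by
    intro k; unfold m; split
    · ring
    · ring
  simp_rw [hstep]
  have hsub : Finset.range (min i j + 1) ⊆ Finset.range (i + 1) :=
    Finset.range_subset_range.mpr (by omega)
  rw [← Finset.sum_subset hsub (fun k hk hk' => ?_)]
  · rw [Finset.sum_congr rfl (fun k hk => if_pos (by
      simp only [Finset.mem_range] at hk; omega)), ← Finset.sum_div, sum_q]
  · rw [if_neg (by simp only [Finset.mem_range] at hk hk'; omega)]

lemma entry_eq (i j : ℕ) :
    (1 / (a i * a (i + 1))) * ∑ k ∈ range (i + 1), a k ^ 2 * (q k * m j k)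
      = m (max i j) (min i j) := by
  rw [rhs_sum]
  have hi := a_ne i; have hi1 := a_ne (i + 1)
  have hj := a_ne j; have hj1 := a_ne (j + 1)
  rcases le_total i j with h | h
  · rw [min_eq_left h, max_eq_right h]
    unfold m; rw [if_pos h]
    field_simp
  · rw [min_eq_right h, max_eq_left h]
    unfold m; rw [if_pos h]
    have hjj := a_ne (j + 1)
    field_simp

end

end FibPosAux
namespace FibPosAux

open Finset Filter Topology

noncomputable section

local notation "ℋ" => lp (fun _ : ℕ => ℂ) 2

lemma coord (f : ℋ) (i : ℕ) : f i = @inner ℂ _ _ (lp.single 2 i (1 : ℂ)) f := by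
  rw [lp.inner_single_left]
  simp [RCLike.inner_apply]

lemma single_coord (j l : ℕ) :
    (lp.single 2 j (1 : ℂ) : ∀ _ : ℕ, ℂ) l = if l = j then 1 else 0 := by
  rcases eq_or_ne l j with rfl | h
  · simp [lp.single_apply_self]
  · simp [lp.single_apply_ne _ _ _ h, h]

lemma ext_single (T S : ℋ →L[ℂ] ℋ)
    (h : ∀ j, T (lp.single 2 j (1 : ℂ)) = S (lp.single 2 j (1 : ℂ))) : T = S := by
  refine ContinuousLinearMap.ext fun f => ?_
  have hs := lp.hasSum_single (E := fun _ : ℕ => ℂ) ENNReal.ofNat_ne_top f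
  have h1 := hs.mapL T
  have h2 := hs.mapL S
  have he : ∀ j, T (lp.single 2 j (f j)) = S (lp.single 2 j (f j)) := by
    intro j
    have hsm : lp.single (E := fun _ : ℕ => ℂ) 2 j (f j) = (f j) • lp.single 2 j (1 : ℂ) := by
      rw [← lp.single_smul]; norm_num
    rw [hsm, map_smul, map_smul, h j]
  rw [show (fun j => T (lp.single 2 j (f j))) = (fun j => S (lp.single 2 j (f j)))
    from funext he] at h1
  exact h1.unique h2

lemma diag_isPositive (T : ℋ →L[ℂ] ℋ) (c : ℕ → ℝ) (hc : ∀ n, 0 ≤ c n)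
    (hT : ∀ (f : ℋ) (n : ℕ), T f n = ((c n : ℝ) : ℂ) * f n) : T.IsPositive := by
  constructor
  · intro x y
    show @inner ℂ _ _ (T x) y = @inner ℂ _ _ x (T y)
    rw [lp.inner_eq_tsum, lp.inner_eq_tsum]
    refine tsum_congr fun n => ?_
    rw [hT, hT]
    simp only [RCLike.inner_apply, map_mul, Complex.conj_ofReal]
    ring
  · intro x
    rw [ContinuousLinearMap.reApplyInnerSelf_apply]
    have h1 := lp.hasSum_inner (𝕜 := ℂ) (T x) x
    have h2 : (fun n => @inner ℂ _ _ ((T x) n) (x n))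
        = fun n => ((c n * Complex.normSq (x n) : ℝ) : ℂ) := by
      funext n
      rw [RCLike.inner_apply, hT, map_mul, Complex.conj_ofReal, mul_left_comm,
        Complex.mul_conj, ← Complex.ofReal_mul]
    rw [h2] at h1
    have h3 := h1.mapL Complex.reCLM
    simp only [Complex.reCLM_apply, Complex.ofReal_re] at h3
    have h4 := h3.nonneg fun n => mul_nonneg (hc n) (Complex.normSq_nonneg _)
    simpa using h4

end

end FibPosAux
open ContinuousLinearMap

set_option maxHeartbeats 1000000 in
open FibPosAux in
/-- The Fibonacci factorable matrix satisfies M* P M = M Q M* with the stated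
diagonal operators; moreover I ≤ Q ≤ 2I and (1/2)I ≤ P ≤ 4I; hence M is both
posinormal and coposinormal. -/
theorem fibonacci_factorable_posinormal_coposinormal
    (M P Q : lp (fun _ : ℕ => ℂ) 2 →L[ℂ] lp (fun _ : ℕ => ℂ) 2)
    (hM : ∀ f : lp (fun _ : ℕ => ℂ) 2, ∀ i : ℕ,
      M f i = (1 / ((Nat.fib (i + 1) : ℂ) * (Nat.fib (i + 2) : ℂ))) *
        ∑ j ∈ Finset.range (i + 1), ((Nat.fib (j + 1) : ℂ) ^ 2) * f j)
    (hP : ∀ f : lp (fun _ : ℕ => ℂ) 2, ∀ n : ℕ,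
      P f n = ((((Nat.fib (n + 2) : ℝ) ^ 2 * Nat.fib (n + 3) - (Nat.fib (n + 1) : ℝ) ^ 3) /
        ((Nat.fib (n + 1) : ℝ) * Nat.fib (n + 2) * Nat.fib (n + 3)) : ℝ) : ℂ) * f n)
    (hQ : ∀ f : lp (fun _ : ℕ => ℂ) 2, ∀ n : ℕ,
      Q f n = ((((Nat.fib (n + 1) : ℝ) ^ 2 * Nat.fib (n + 2) - (Nat.fib n : ℝ) ^ 3) /
        ((Nat.fib (n + 1) : ℝ) ^ 3) : ℝ) : ℂ) * f n) :
    adjoint M ∘L P ∘L M = M ∘L Q ∘L adjoint M ∧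
    (Q - 1).IsPositive ∧ ((2 : ℂ) • (1 : lp (fun _ : ℕ => ℂ) 2 →L[ℂ] lp (fun _ : ℕ => ℂ) 2) - Q).IsPositive ∧
    (P - ((1 / 2 : ℂ) • 1)).IsPositive ∧ ((4 : ℂ) • (1 : lp (fun _ : ℕ => ℂ) 2 →L[ℂ] lp (fun _ : ℕ => ℂ) 2) - P).IsPositive ∧
    (∃ γ : ℝ, 0 ≤ γ ∧ (((γ : ℂ) ^ 2) • (adjoint M ∘L M) - M ∘L adjoint M).IsPositive) ∧
    (∃ γ : ℝ, 0 ≤ γ ∧ (((γ : ℂ) ^ 2) • (M ∘L adjoint M) - adjoint M ∘L M).IsPositive) := by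
  -- coefficient identifications
  have hpc : ∀ k : ℕ, (((Nat.fib (k + 2) : ℝ) ^ 2 * Nat.fib (k + 3) - (Nat.fib (k + 1) : ℝ) ^ 3) /
      ((Nat.fib (k + 1) : ℝ) * Nat.fib (k + 2) * Nat.fib (k + 3)) : ℝ) = p k := by
    intro k; simp [p, a]
  have hqc : ∀ k : ℕ, (((Nat.fib (k + 1) : ℝ) ^ 2 * Nat.fib (k + 2) - (Nat.fib k : ℝ) ^ 3) /
      ((Nat.fib (k + 1) : ℝ) ^ 3) : ℝ) = q k := by
    intro k; simp [q, a]
  -- entries of M on basis vectors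
  have hMe : ∀ j k : ℕ, M (lp.single 2 j (1 : ℂ)) k = ((m k j : ℝ) : ℂ) := by
    intro j k
    rw [hM]
    have hterm : ∀ l ∈ Finset.range (k + 1),
        ((Nat.fib (l + 1) : ℂ) ^ 2) * (lp.single 2 j (1 : ℂ) : ∀ _ : ℕ, ℂ) l
          = if l = j then ((Nat.fib (l + 1) : ℂ) ^ 2) else 0 := by
      intro l _
      rw [single_coord]
      split <;> simp
    rw [Finset.sum_congr rfl hterm, Finset.sum_ite_eq' (Finset.range (k + 1)) j _]
    simp only [Finset.mem_range, Nat.lt_succ_iff]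
    unfold m a
    simp only [show k + 1 + 1 = k + 2 from rfl]
    by_cases hjk : j ≤ k
    · rw [if_pos hjk, if_pos hjk]
      push_cast
      ring
    · rw [if_neg hjk, if_neg hjk, mul_zero]
      norm_num
  -- entries of adjoint M on basis vectors
  have hMa : ∀ j k : ℕ, (adjoint M) (lp.single 2 j (1 : ℂ)) k = ((m j k : ℝ) : ℂ) := by
    intro j k
    rw [coord ((adjoint M) (lp.single 2 j (1 : ℂ))) k, adjoint_inner_right,
      lp.inner_single_right, hMe k j]
    simp [RCLike.inner_apply, Complex.conj_ofReal]
  -- left-hand side entries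
  have hL : ∀ i j : ℕ, ((adjoint M ∘L P ∘L M) (lp.single 2 j (1 : ℂ))) i
      = ((m (max i j) (min i j) : ℝ) : ℂ) := by
    intro i j
    rw [ContinuousLinearMap.comp_apply, ContinuousLinearMap.comp_apply,
      coord _ i, adjoint_inner_right]
    have h1 := lp.hasSum_inner (𝕜 := ℂ) (M (lp.single 2 i (1 : ℂ))) (P (M (lp.single 2 j (1 : ℂ))))
    have hfun : (fun k => @inner ℂ _ _ ((M (lp.single 2 i (1 : ℂ))) k)
        ((P (M (lp.single 2 j (1 : ℂ)))) k))
        = fun k => (((m k i * (p k * m k j)) : ℝ) : ℂ) := by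
      funext k
      rw [RCLike.inner_apply, hP, hpc, hMe, hMe, Complex.conj_ofReal]
      push_cast
      ring
    rw [hfun] at h1
    have h2 : HasSum (fun k => (((m k i * (p k * m k j)) : ℝ) : ℂ))
        (((m (max i j) (min i j) : ℝ)) : ℂ) := by
      rw [← tele_val i j]
      exact Complex.hasSum_ofReal.mpr (hasSum_tele i j)
    exact h1.unique h2
  -- right-hand side entries
  have hR : ∀ i j : ℕ, ((M ∘L Q ∘L adjoint M) (lp.single 2 j (1 : ℂ))) i
      = ((m (max i j) (min i j) : ℝ) : ℂ) := by
    intro i j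
    rw [ContinuousLinearMap.comp_apply, ContinuousLinearMap.comp_apply, hM]
    have hterm : ∀ k ∈ Finset.range (i + 1),
        ((Nat.fib (k + 1) : ℂ) ^ 2) * (Q ((adjoint M) (lp.single 2 j (1 : ℂ)))) k
          = (((a k ^ 2 * (q k * m j k)) : ℝ) : ℂ) := by
      intro k _
      rw [hQ, hqc, hMa]
      push_cast [a]
      ring
    rw [Finset.sum_congr rfl hterm, ← Complex.ofReal_sum]
    have hfac : (1 / ((Nat.fib (i + 1) : ℂ) * (Nat.fib (i + 2) : ℂ)))
        = (((1 / (a i * a (i + 1)) : ℝ)) : ℂ) := by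
      push_cast [a]
      ring
    rw [hfac, ← Complex.ofReal_mul, entry_eq i j]
  -- the operator identity
  have hEq : adjoint M ∘L P ∘L M = M ∘L Q ∘L adjoint M := by
    apply ext_single
    intro j
    apply lp.ext
    funext i
    exact (hL i j).trans (hR i j).symm
  -- coordinates of the diagonal combinations
  have cQ1 : ∀ (f : lp (fun _ : ℕ => ℂ) 2) (n : ℕ),
      (Q - 1) f n = ((q n - 1 : ℝ) : ℂ) * f n := by
    intro f n
    rw [ContinuousLinearMap.sub_apply, ContinuousLinearMap.one_apply]
    rw [lp.coeFn_sub, Pi.sub_apply, hQ, hqc]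
    push_cast
    ring
  have c2Q : ∀ (f : lp (fun _ : ℕ => ℂ) 2) (n : ℕ),
      ((2 : ℂ) • (1 : lp (fun _ : ℕ => ℂ) 2 →L[ℂ] lp (fun _ : ℕ => ℂ) 2) - Q) f n
        = ((2 - q n : ℝ) : ℂ) * f n := by
    intro f n
    rw [ContinuousLinearMap.sub_apply, ContinuousLinearMap.smul_apply,
      ContinuousLinearMap.one_apply]
    rw [lp.coeFn_sub, Pi.sub_apply, lp.coeFn_smul, Pi.smul_apply, hQ, hqc]
    push_cast
    simp [smul_eq_mul]
    ring
  have cPh : ∀ (f : lp (fun _ : ℕ => ℂ) 2) (n : ℕ),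
      (P - ((1 / 2 : ℂ) • 1)) f n = ((p n - 1 / 2 : ℝ) : ℂ) * f n := by
    intro f n
    rw [ContinuousLinearMap.sub_apply, ContinuousLinearMap.smul_apply,
      ContinuousLinearMap.one_apply]
    rw [lp.coeFn_sub, Pi.sub_apply, lp.coeFn_smul, Pi.smul_apply, hP, hpc]
    push_cast
    simp [smul_eq_mul]
    ring
  have c4P : ∀ (f : lp (fun _ : ℕ => ℂ) 2) (n : ℕ),
      ((4 : ℂ) • (1 : lp (fun _ : ℕ => ℂ) 2 →L[ℂ] lp (fun _ : ℕ => ℂ) 2) - P) f n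
        = ((4 - p n : ℝ) : ℂ) * f n := by
    intro f n
    rw [ContinuousLinearMap.sub_apply, ContinuousLinearMap.smul_apply,
      ContinuousLinearMap.one_apply]
    rw [lp.coeFn_sub, Pi.sub_apply, lp.coeFn_smul, Pi.smul_apply, hP, hpc]
    push_cast
    simp [smul_eq_mul]
    ring
  have c42Q : ∀ (f : lp (fun _ : ℕ => ℂ) 2) (n : ℕ),
      ((4 : ℂ) • (1 : lp (fun _ : ℕ => ℂ) 2 →L[ℂ] lp (fun _ : ℕ => ℂ) 2) - (2 : ℂ) • Q) f n
        = ((4 - 2 * q n : ℝ) : ℂ) * f n := by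
    intro f n
    rw [ContinuousLinearMap.sub_apply, ContinuousLinearMap.smul_apply,
      ContinuousLinearMap.smul_apply, ContinuousLinearMap.one_apply]
    rw [lp.coeFn_sub, Pi.sub_apply, lp.coeFn_smul, Pi.smul_apply, lp.coeFn_smul,
      Pi.smul_apply, hQ, hqc]
    push_cast
    simp [smul_eq_mul]
    ring
  have c2P1 : ∀ (f : lp (fun _ : ℕ => ℂ) 2) (n : ℕ),
      ((2 : ℂ) • P - 1) f n = ((2 * p n - 1 : ℝ) : ℂ) * f n := by
    intro f n
    rw [ContinuousLinearMap.sub_apply, ContinuousLinearMap.smul_apply,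
      ContinuousLinearMap.one_apply]
    rw [lp.coeFn_sub, Pi.sub_apply, lp.coeFn_smul, Pi.smul_apply, hP, hpc]
    push_cast
    simp [smul_eq_mul]
    ring
  -- positivity of the diagonal operators
  have posQ1 := diag_isPositive _ (fun n => q n - 1) (fun n => by show (0:ℝ) ≤ q n - 1; linarith [q_lb n]) cQ1
  have pos2Q := diag_isPositive _ (fun n => 2 - q n) (fun n => by show (0:ℝ) ≤ 2 - q n; linarith [q_ub n]) c2Q
  have posPh := diag_isPositive _ (fun n => p n - 1 / 2) (fun n => by show (0:ℝ) ≤ p n - 1/2; linarith [p_lb n]) cPh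
  have pos4P := diag_isPositive _ (fun n => 4 - p n) (fun n => by show (0:ℝ) ≤ 4 - p n; linarith [p_ub n]) c4P
  have pos42Q := diag_isPositive _ (fun n => 4 - 2 * q n) (fun n => by show (0:ℝ) ≤ 4 - 2 * q n; linarith [q_ub n]) c42Q
  have pos2P1 := diag_isPositive _ (fun n => 2 * p n - 1) (fun n => by show (0:ℝ) ≤ 2 * p n - 1; linarith [p_lb n]) c2P1
  refine ⟨hEq, posQ1, pos2Q, posPh, pos4P, ⟨2, by norm_num, ?_⟩, ⟨2, by norm_num, ?_⟩⟩
  · have e6 : (((2 : ℝ) : ℂ) ^ 2) • (adjoint M ∘L M) - M ∘L adjoint M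
        = (adjoint M ∘L ((4 : ℂ) • (1 : lp (fun _ : ℕ => ℂ) 2 →L[ℂ] lp (fun _ : ℕ => ℂ) 2) - P) ∘L M)
          + (M ∘L (Q - 1) ∘L adjoint M) := by
      refine ContinuousLinearMap.ext fun x => ?_
      have hx := ContinuousLinearMap.ext_iff.mp hEq x
      simp only [ContinuousLinearMap.comp_apply, ContinuousLinearMap.sub_apply,
        ContinuousLinearMap.add_apply, ContinuousLinearMap.smul_apply,
        ContinuousLinearMap.one_apply, map_sub, map_smul] at hx ⊢
      rw [hx]
      have h4 : (((2 : ℝ) : ℂ) ^ 2) = (4 : ℂ) := by norm_num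
      rw [h4]
      module
    rw [e6]
    exact (pos4P.adjoint_conj M).add (posQ1.conj_adjoint M)
  · have e7 : (((2 : ℝ) : ℂ) ^ 2) • (M ∘L adjoint M) - adjoint M ∘L M
        = (M ∘L ((4 : ℂ) • (1 : lp (fun _ : ℕ => ℂ) 2 →L[ℂ] lp (fun _ : ℕ => ℂ) 2) - (2 : ℂ) • Q) ∘L adjoint M)
          + (adjoint M ∘L ((2 : ℂ) • P - 1) ∘L M) := by
      refine ContinuousLinearMap.ext fun x => ?_
      have hx := ContinuousLinearMap.ext_iff.mp hEq x
      simp only [ContinuousLinearMap.comp_apply, ContinuousLinearMap.sub_apply,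
        ContinuousLinearMap.add_apply, ContinuousLinearMap.smul_apply,
        ContinuousLinearMap.one_apply, map_sub, map_smul] at hx ⊢
      rw [hx]
      have h4 : (((2 : ℝ) : ℂ) ^ 2) = (4 : ℂ) := by norm_num
      rw [h4]
      module
    rw [e7]
    exact (pos42Q.conj_adjoint M).add (pos2P1.adjoint_conj M)
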